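/- Let C = {q₁,...,q_k} be linearly independent vectors in ℝ^d, locally optimal for volume with respect to P (for all v ∈ P \ C, u ∈ C: VOL(C) ≥ VOL(C − u + v)). Let p ∈ P, let G = span(C), and let p_G be the orthogonal projection of p onto G. Then p_G = Σ_{i=1}^k α_i q_i with |α_i| ≤ 1 for all i. -/

import Mathlib

abbrev Pt (d : ℕ) := EuclideanSpace ℝ (Fin d)

noncomputable def gvol {d : ℕ} {ι : Type} [Fintype ι] [DecidableEq ι]
    (v : ι → Pt d) : ℝ :=
  Real.sqrt (Matrix.det (Matrix.of fun i j => (inner ℝ (v i) (v j) : ℝ)))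

def LocallyOptimal {d k : ℕ} (P : Set (Pt d)) (q : Fin k → Pt d) : Prop :=
  Function.Injective q ∧ Set.range q ⊆ P ∧
    ∀ v ∈ P, v ∉ Set.range q → ∀ u : Fin k, gvol (Function.update q u v) ≤ gvol q

noncomputable def gram {d k : ℕ} (v : Fin k → Pt d) : Matrix (Fin k) (Fin k) ℝ :=
  Matrix.of fun i j => (inner ℝ (v i) (v j) : ℝ)

lemma gram_quad {d k : ℕ} (v : Fin k → Pt d) (x : Fin k → ℝ) :
    dotProduct (star x) ((gram v).mulVec x) = (inner ℝ (∑ i, x i • v i) (∑ i, x i • v i) : ℝ) := by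
  simp [gram, dotProduct, Matrix.mulVec, inner_sum, sum_inner, inner_smul_left,
    inner_smul_right, Finset.mul_sum, mul_comm, mul_left_comm]
  rw [← real_inner_self_eq_norm_sq, sum_inner]
  simp [inner_sum, inner_smul_left, inner_smul_right, Finset.mul_sum, mul_comm, mul_left_comm]

lemma gram_posSemidef {d k : ℕ} (v : Fin k → Pt d) : (gram v).PosSemidef := by
  refine Matrix.posSemidef_iff_dotProduct_mulVec.mpr ⟨?_, ?_⟩
  · ext i j
    simp only [gram, Matrix.conjTranspose_apply, Matrix.of_apply, star_trivial]
    exact real_inner_comm _ _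
  · intro x
    rw [gram_quad]
    exact real_inner_self_nonneg

lemma gram_det_nonneg {d k : ℕ} (v : Fin k → Pt d) : 0 ≤ (gram v).det := by
  have h := gram_posSemidef v
  rw [h.isHermitian.det_eq_prod_eigenvalues]
  exact Finset.prod_nonneg fun i _ => h.eigenvalues_nonneg i

lemma gram_det_pos {d k : ℕ} {v : Fin k → Pt d} (hv : LinearIndependent ℝ v) :
    0 < (gram v).det := by
  have hpd : (gram v).PosDef := by
    refine Matrix.posDef_iff_dotProduct_mulVec.mpr ⟨(gram_posSemidef v).isHermitian, fun x hx => ?_⟩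
    rw [gram_quad]
    have hne : (∑ i, x i • v i) ≠ 0 := by
      intro hsum
      exact hx (funext fun i => (Fintype.linearIndependent_iff.mp hv x hsum i))
    have h0 : (inner ℝ (∑ i, x i • v i) (∑ i, x i • v i) : ℝ) ≠ 0 :=
      fun h => hne (inner_self_eq_zero.mp h)
    exact lt_of_le_of_ne real_inner_self_nonneg (Ne.symm h0)
  exact hpd.det_pos

lemma gram_update_det {d k : ℕ} (q : Fin k → Pt d) (β : Fin k → ℝ) (w : Pt d)
    (hw : ∀ i, (inner ℝ w (q i) : ℝ) = 0) (u : Fin k) :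
    (gram (Function.update q u (w + ∑ l, β l • q l))).det
      = β u ^ 2 * (gram q).det + (gram (Function.update q u w)).det := by
  classical
  set p : Pt d := w + ∑ l, β l • q l with hp
  set v : Fin k → Pt d := Function.update q u p with hv
  have hvne : ∀ j, j ≠ u → v j = q j := fun j hj => Function.update_of_ne hj _ _
  have hvu : v u = p := Function.update_self _ _ _
  -- mixed matrices
  set M₁ : Matrix (Fin k) (Fin k) ℝ := Matrix.of fun i j => (inner ℝ (q i) (v j) : ℝ) with hM₁
  set u' : Fin k → Pt d := Function.update q u w with hu'
  set N₁ : Matrix (Fin k) (Fin k) ℝ := Matrix.of fun i j => (inner ℝ (u' i) (q j) : ℝ) with hN₁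
  have hu'ne : ∀ j, j ≠ u → u' j = q j := fun j hj => Function.update_of_ne hj _ _
  have hu'u : u' u = w := Function.update_self _ _ _
  have hwq : ∀ i, (inner ℝ (q i) w : ℝ) = 0 := fun i => by rw [real_inner_comm]; exact hw i
  -- Step 1 : det M
  have hM : gram v = (Matrix.updateRow M₁ u
      ((fun j => (inner ℝ w (v j) : ℝ)) + ∑ l, β l • M₁ l)) := by
    ext i j
    by_cases hi : i = u
    · subst hi
      rw [Matrix.updateRow_self]
      simp only [Pi.add_apply, Finset.sum_apply, Pi.smul_apply, smul_eq_mul]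
      rw [gram]
      simp only [Matrix.of_apply, hvu, hp]
      rw [inner_add_left, sum_inner]
      simp only [inner_smul_left, RCLike.conj_to_real, hM₁, Matrix.of_apply]
    · rw [Matrix.updateRow_ne hi]
      simp only [gram, hM₁, Matrix.of_apply]
      rw [hvne i hi]
  have step1 : (gram v).det
      = (Matrix.updateRow M₁ u (fun j => (inner ℝ w (v j) : ℝ))).det + β u * M₁.det := by
    rw [hM, Matrix.det_updateRow_add, Matrix.det_updateRow_sum, smul_eq_mul]
  -- Step 2 : det M₁ = β u * det (gram q)
  have hM1eq : M₁ = Matrix.updateCol (gram q) u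
      (fun i : Fin k => ∑ l, β l • (gram q) i l) := by
    ext i j
    by_cases hj : j = u
    · subst hj
      rw [Matrix.updateCol_self]
      simp only [hM₁, Matrix.of_apply, hvu, hp, smul_eq_mul]
      rw [inner_add_right, inner_sum]
      simp only [inner_smul_right, gram, Matrix.of_apply, hwq]
      ring
    · rw [Matrix.updateCol_ne hj]
      simp only [hM₁, gram, Matrix.of_apply]
      rw [hvne j hj]
  have step2 : M₁.det = β u * (gram q).det := by
    rw [hM1eq, Matrix.det_updateCol_sum]; simp [smul_eq_mul]
  -- Step 3 : the leftover term
  set M₂ : Matrix (Fin k) (Fin k) ℝ := Matrix.updateRow M₁ u (fun j => (inner ℝ w (v j) : ℝ)) with hM₂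
  have hM2entry : ∀ i j, M₂ i j = (inner ℝ (u' i) (v j) : ℝ) := by
    intro i j
    by_cases hi : i = u
    · subst hi; rw [hM₂, Matrix.updateRow_self, hu'u]
    · rw [hM₂, Matrix.updateRow_ne hi, hM₁]
      simp only [Matrix.of_apply]
      rw [hu'ne i hi]
  have hM2eq : M₂ = Matrix.updateCol N₁ u
      ((fun i : Fin k => (inner ℝ (u' i) w : ℝ)) + fun i : Fin k => ∑ l, β l • N₁ i l) := by
    ext i j
    by_cases hj : j = u
    · subst hj
      rw [Matrix.updateCol_self, hM2entry]
      simp only [Pi.add_apply, hvu, hp, smul_eq_mul]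
      rw [inner_add_right, inner_sum]
      simp only [inner_smul_right, hN₁, Matrix.of_apply]
    · rw [Matrix.updateCol_ne hj, hM2entry, hN₁]
      simp only [Matrix.of_apply]
      rw [hvne j hj]
  have hN₁det : N₁.det = 0 := by
    apply Matrix.det_eq_zero_of_row_eq_zero u
    intro j
    simp only [hN₁, Matrix.of_apply, hu'u]
    exact hw j
  have hgramu' : Matrix.updateCol N₁ u (fun i : Fin k => (inner ℝ (u' i) w : ℝ)) = gram u' := by
    ext i j
    by_cases hj : j = u
    · subst hj
      rw [Matrix.updateCol_self]
      simp only [gram, Matrix.of_apply, hu'u]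
    · rw [Matrix.updateCol_ne hj]
      simp only [hN₁, gram, Matrix.of_apply]
      rw [hu'ne j hj]
  have step3 : M₂.det = (gram u').det := by
    have : M₂.det = (Matrix.updateCol N₁ u (fun i : Fin k => (inner ℝ (u' i) w : ℝ))).det
        + (Matrix.updateCol N₁ u (fun i : Fin k => ∑ l, β l • N₁ i l)).det := by
      rw [hM2eq, Matrix.det_updateCol_add]
    rw [this, hgramu', Matrix.det_updateCol_sum, hN₁det]
    simp
  rw [step1, step3, step2]
  ring

/-- If `C = {q 0, …, q (k-1)}` is linearly independent and locally optimal for volume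
with respect to `P`, then the orthogonal projection of any `p ∈ P` onto
`G = span C` can be written as `∑ α i • q i` with all `|α i| ≤ 1`. -/
theorem locallyOptimal_projection_coeffs {d k : ℕ} (P : Set (Pt d))
    (q : Fin k → Pt d) (hind : LinearIndependent ℝ q)
    (hopt : LocallyOptimal P q) (p : Pt d) (hp : p ∈ P) :
    ∃ α : Fin k → ℝ,
      (((Submodule.span ℝ (Set.range q)).orthogonalProjectionOnto p : Pt d)
        = ∑ i, α i • q i) ∧ ∀ i, |α i| ≤ 1 := by
  classical
  set G := Submodule.span ℝ (Set.range q) with hG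
  by_cases hpr : p ∈ Set.range q
  · obtain ⟨j, hj⟩ := hpr
    refine ⟨Pi.single j 1, ?_, ?_⟩
    · have hmem : p ∈ G := Submodule.subset_span ⟨j, hj⟩
      rw [show (G.orthogonalProjectionOnto p : Pt d) = p from (Submodule.starProjection_eq_self_iff (K := G)).mpr hmem, ← hj]
      simp [Pi.single_apply, ite_smul]
    · intro i
      by_cases hi : i = j <;> simp [Pi.single_apply, hi]
  · set pG : Pt d := (G.orthogonalProjectionOnto p : Pt d) with hpG
    have hGmem : pG ∈ G := SetLike.coe_mem _
    obtain ⟨β, hβ⟩ := (Submodule.mem_span_range_iff_exists_fun ℝ).mp hGmem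
    set w : Pt d := p - pG with hwdef
    have hworth : ∀ i, (inner ℝ w (q i) : ℝ) = 0 := by
      have hwmem : w ∈ Gᗮ := Submodule.sub_starProjection_mem_orthogonal (K := G) p
      intro i
      have hqi : q i ∈ G := Submodule.subset_span ⟨i, rfl⟩
      have := (Submodule.mem_orthogonal G w).mp hwmem (q i) hqi
      rw [real_inner_comm]
      exact this
    refine ⟨β, hβ.symm, fun u => ?_⟩
    have hkey := gram_update_det q β w hworth u
    have hupd : Function.update q u p = Function.update q u (w + ∑ l, β l • q l) := by
      have hpw : w + ∑ l, β l • q l = p := by rw [hβ, hwdef]; abel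
      rw [hpw]
    have hopt' := hopt.2.2 p hp hpr u
    have hgv : ∀ v : Fin k → Pt d, gvol v = Real.sqrt ((gram v).det) := fun _ => rfl
    rw [hgv, hgv] at hopt'
    have hdetle : (gram (Function.update q u p)).det ≤ (gram q).det :=
      (Real.sqrt_le_sqrt_iff (gram_det_nonneg q)).mp hopt'
    rw [hupd, hkey] at hdetle
    have hnn : 0 ≤ (gram (Function.update q u w)).det := gram_det_nonneg _
    have hpos : 0 < (gram q).det := gram_det_pos hind
    have hsq : β u ^ 2 ≤ 1 := by
      nlinarith
    exact (sq_le_one_iff_abs_le_one (β u)).mp hsq
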